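/- Fix n ≥ 1 and let λ : BitVec n → ℝ be nonnegative with Σ_i λ_i = 1. Define X(λ) = Σ_{i1,i2,i3,i4 ∈ BitVec n} √( λ_{i1} λ_{i2} λ_{i3} λ_{i4} λ_{i1⊕i2⊕i3} λ_{i1⊕i2⊕i4} λ_{i1⊕i3⊕i4} λ_{i2⊕i3⊕i4} ), where ⊕ denotes bitwise XOR. Let μ : BitVec n → ℝ be the nonincreasing rearrangement of λ with respect to the numeric order on BitVec n (μ takes the same multiset of values as λ, arranged so that μ_i ≥ μ_j whenever i ≤ j numerically). Then X(λ) ≤ X(μ); equivalently, the non-local stabilizer 2-Rényi entropy estimate M₂({λ}) = −log X(λ) attains its minimum over all orderings of the eigenvalues when the eigenvalues are in descending order. -/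

import Mathlib

open scoped BigOperators

instance {n : ℕ} : Fintype (BitVec n) :=
  Fintype.ofEquiv (Fin (2 ^ n)) ⟨BitVec.ofFin, BitVec.toFin, fun _ => rfl, fun _ => rfl⟩

/-- The XOR sum `X(λ)` underlying the non-local stabilizer 2-Rényi entropy estimate
`M₂({λ}) = −log X(λ)`:
`X(λ) = Σ_{i1,i2,i3,i4} √(λ_{i1} λ_{i2} λ_{i3} λ_{i4} λ_{i1⊕i2⊕i3} λ_{i1⊕i2⊕i4}
λ_{i1⊕i3⊕i4} λ_{i2⊕i3⊕i4})`, where `⊕` is bitwise XOR. -/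
noncomputable def xorSum {n : ℕ} (lam : BitVec n → ℝ) : ℝ :=
  ∑ i1, ∑ i2, ∑ i3, ∑ i4,
    Real.sqrt (lam i1 * lam i2 * lam i3 * lam i4 *
      lam (i1 ^^^ i2 ^^^ i3) * lam (i1 ^^^ i2 ^^^ i4) *
      lam (i1 ^^^ i3 ^^^ i4) * lam (i2 ^^^ i3 ^^^ i4))

namespace XorProof



variable {n : ℕ}

theorem xor_cancel' {n : ℕ} (a b : BitVec n) : a ^^^ (a ^^^ b) = b := by
  rw [← BitVec.xor_assoc, BitVec.xor_self, BitVec.zero_xor]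

theorem xor_left_comm {n : ℕ} (a b c : BitVec n) : a ^^^ (b ^^^ c) = b ^^^ (a ^^^ c) := by
  rw [← BitVec.xor_assoc, BitVec.xor_comm a b, BitVec.xor_assoc]

/-- xor-cancel -/
theorem xx (x e : BitVec n) : (x ^^^ e) ^^^ e = x := by
  rw [BitVec.xor_assoc, BitVec.xor_self, BitVec.xor_zero]

theorem xor_ne (x : BitVec n) {e : BitVec n} (he : e ≠ 0#n) : x ^^^ e ≠ x := by
  intro h
  apply he
  have := congrArg (x ^^^ ·) h
  have h2 : 0#n = e := by
    simpa [← BitVec.xor_assoc, BitVec.xor_self, BitVec.xor_zero, BitVec.zero_xor] using this.symm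
  exact h2.symm

/-- the distinguished bit of e -/
def kbit (e : BitVec n) : ℕ := e.toNat.log2

theorem testBit_kbit {e : BitVec n} (he : e ≠ 0#n) : e.toNat.testBit (kbit e) = true := by
  have hE : e.toNat ≠ 0 := by
    intro h; apply he; apply BitVec.toNat_injective; simpa using h
  have h1 : 2 ^ (kbit e) ≤ e.toNat := Nat.log2_self_le hE
  have h2 : e.toNat < 2 ^ (kbit e + 1) := Nat.lt_log2_self
  have hdiv : e.toNat / 2 ^ (kbit e) = 1 := by
    have hlo : 1 ≤ e.toNat / 2 ^ (kbit e) := (Nat.one_le_div_iff (Nat.two_pow_pos _)).2 h1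
    have hhi : e.toNat / 2 ^ (kbit e) < 2 := by
      rw [Nat.div_lt_iff_lt_mul (Nat.two_pow_pos _)]
      calc e.toNat < 2 ^ (kbit e + 1) := h2
        _ = 2 * 2 ^ (kbit e) := by ring
      
    omega
  rw [Nat.testBit_eq_decide_div_mod_eq, hdiv]
  norm_num

theorem testBit_kbit_gt {e : BitVec n} (he : e ≠ 0#n) {j : ℕ} (hj : kbit e < j) :
    e.toNat.testBit j = false := by
  apply Nat.testBit_eq_false_of_lt
  calc e.toNat < 2 ^ (kbit e + 1) := Nat.lt_log2_self
    _ ≤ 2 ^ j := Nat.pow_le_pow_right (by norm_num) hj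

/-- low x : x is the numerically smaller element of the pair {x, x^^^e} -/
theorem low_iff {e : BitVec n} (he : e ≠ 0#n) (x : BitVec n) :
    x.toNat < (x ^^^ e).toNat ↔ x.toNat.testBit (kbit e) = false := by
  have hxe : (x ^^^ e).toNat = x.toNat ^^^ e.toNat := by simp [BitVec.toNat_xor]
  have hagree : ∀ j, kbit e < j → (x.toNat).testBit j = (x.toNat ^^^ e.toNat).testBit j := by
    intro j hj
    rw [Nat.testBit_xor, testBit_kbit_gt he hj, Bool.xor_false]
  constructor
  · intro hlt
    by_contra hbit
    have hbit' : x.toNat.testBit (kbit e) = true := by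
      cases h : x.toNat.testBit (kbit e) <;> simp_all
    have hy : (x.toNat ^^^ e.toNat).testBit (kbit e) = false := by
      rw [Nat.testBit_xor, hbit', testBit_kbit he]; rfl
    have : x.toNat ^^^ e.toNat < x.toNat := by
      apply Nat.lt_of_testBit (kbit e) hy hbit'
      intro j hj; exact (hagree j hj).symm
    omega
  · intro hbit
    rw [hxe]
    apply Nat.lt_of_testBit (kbit e) hbit
    · rw [Nat.testBit_xor, hbit, testBit_kbit he]; rfl
    · intro j hj; exact hagree j hj

/-- sign of x relative to e -/
noncomputable def sg (e x : BitVec n) : ℝ := if x.toNat.testBit (kbit e) then -1 else 1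

theorem sg_mul (e x y : BitVec n) : sg e (x ^^^ y) = sg e x * sg e y := by
  unfold sg
  rw [show (x ^^^ y).toNat = x.toNat ^^^ y.toNat by simp [BitVec.toNat_xor], Nat.testBit_xor]
  cases h1 : x.toNat.testBit (kbit e) <;> cases h2 : y.toNat.testBit (kbit e) <;> simp

theorem sg_sq (e x : BitVec n) : sg e x * sg e x = 1 := by
  unfold sg; cases h : x.toNat.testBit (kbit e) <;> simp

theorem sg_xor_e (e : BitVec n) (he : e ≠ 0#n) (x : BitVec n) : sg e (x ^^^ e) = - sg e x := by
  rw [sg_mul]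
  unfold sg
  rw [testBit_kbit he]
  cases h : x.toNat.testBit (kbit e) <;> simp [sg, h]




variable {n : ℕ}

/-- two-point compression along e -/
noncomputable def cmp (nu : BitVec n → ℝ) (e : BitVec n) (x : BitVec n) : ℝ :=
  if x.toNat < (x ^^^ e).toNat then max (nu x) (nu (x ^^^ e)) else min (nu x) (nu (x ^^^ e))

/-- the 8-factor product -/
noncomputable def term (g : BitVec n → ℝ) (i1 i2 i3 i4 : BitVec n) : ℝ :=
  g i1 * g i2 * g i3 * g i4 * g (i1 ^^^ i2 ^^^ i3) * g (i1 ^^^ i2 ^^^ i4) *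
    g (i1 ^^^ i3 ^^^ i4) * g (i2 ^^^ i3 ^^^ i4)

noncomputable def xorSum' (g : BitVec n → ℝ) : ℝ := ∑ i1, ∑ i2, ∑ i3, ∑ i4, term g i1 i2 i3 i4

theorem xorSum'_eq {lam : BitVec n → ℝ} (h : ∀ i, 0 ≤ lam i) :
    (∑ i1, ∑ i2, ∑ i3, ∑ i4,
      Real.sqrt (lam i1 * lam i2 * lam i3 * lam i4 *
        lam (i1 ^^^ i2 ^^^ i3) * lam (i1 ^^^ i2 ^^^ i4) *
        lam (i1 ^^^ i3 ^^^ i4) * lam (i2 ^^^ i3 ^^^ i4))) =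
    xorSum' (fun x => Real.sqrt (lam x)) := by
  unfold xorSum' term
  refine Finset.sum_congr rfl fun i1 _ => Finset.sum_congr rfl fun i2 _ =>
    Finset.sum_congr rfl fun i3 _ => Finset.sum_congr rfl fun i4 _ => ?_
  have h1 := h i1; have h2 := h i2; have h3 := h i3; have h4 := h i4
  have h5 := h (i1 ^^^ i2 ^^^ i3); have h6 := h (i1 ^^^ i2 ^^^ i4)
  have h7 := h (i1 ^^^ i3 ^^^ i4); have h8 := h (i2 ^^^ i3 ^^^ i4)
  rw [Real.sqrt_mul (by positivity), Real.sqrt_mul (by positivity),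
    Real.sqrt_mul (by positivity), Real.sqrt_mul (by positivity),
    Real.sqrt_mul (by positivity), Real.sqrt_mul (by positivity),
    Real.sqrt_mul (by positivity)]

/-- reindexing one sum by xor -/
theorem sum_xor (c : BitVec n) (f : BitVec n → ℝ) : (∑ x, f (x ^^^ c)) = ∑ x, f x := by
  apply Fintype.sum_bijective (· ^^^ c)
  · exact Function.Involutive.bijective (fun x => xx x c)
  · intro x; rfl

/-- reindexing all four sums -/
theorem sum_xor4 (c1 c2 c3 c4 : BitVec n) (F : BitVec n → BitVec n → BitVec n → BitVec n → ℝ) :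
    (∑ i1, ∑ i2, ∑ i3, ∑ i4, F (i1 ^^^ c1) (i2 ^^^ c2) (i3 ^^^ c3) (i4 ^^^ c4)) =
    ∑ i1, ∑ i2, ∑ i3, ∑ i4, F i1 i2 i3 i4 := by
  rw [sum_xor c1 (fun x => ∑ i2, ∑ i3, ∑ i4, F x (i2 ^^^ c2) (i3 ^^^ c3) (i4 ^^^ c4))]
  refine Finset.sum_congr rfl fun i1 _ => ?_
  rw [sum_xor c2 (fun x => ∑ i3, ∑ i4, F i1 x (i3 ^^^ c3) (i4 ^^^ c4))]
  refine Finset.sum_congr rfl fun i2 _ => ?_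
  rw [sum_xor c3 (fun x => ∑ i4, F i1 i2 x (i4 ^^^ c4))]
  refine Finset.sum_congr rfl fun i3 _ => ?_
  rw [sum_xor c4 (fun x => F i1 i2 i3 x)]

noncomputable def TT (g : BitVec n → ℝ) (e m1 m2 m3 m4 : BitVec n) : ℝ :=
      g m1 * g m2 * g m3 * g m4 * g (m1 ^^^ m2 ^^^ m3) * g (m1 ^^^ m2 ^^^ m4) * g (m1 ^^^ m3 ^^^ m4) * g (m2 ^^^ m3 ^^^ m4) +
      g m1 * g m2 * g m3 * g (m4 ^^^ e) * g (m1 ^^^ m2 ^^^ m3) * g ((m1 ^^^ m2 ^^^ m4) ^^^ e) * g ((m1 ^^^ m3 ^^^ m4) ^^^ e) * g ((m2 ^^^ m3 ^^^ m4) ^^^ e) +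
      g m1 * g m2 * g (m3 ^^^ e) * g m4 * g ((m1 ^^^ m2 ^^^ m3) ^^^ e) * g (m1 ^^^ m2 ^^^ m4) * g ((m1 ^^^ m3 ^^^ m4) ^^^ e) * g ((m2 ^^^ m3 ^^^ m4) ^^^ e) +
      g m1 * g m2 * g (m3 ^^^ e) * g (m4 ^^^ e) * g ((m1 ^^^ m2 ^^^ m3) ^^^ e) * g ((m1 ^^^ m2 ^^^ m4) ^^^ e) * g (m1 ^^^ m3 ^^^ m4) * g (m2 ^^^ m3 ^^^ m4) +
      g m1 * g (m2 ^^^ e) * g m3 * g m4 * g ((m1 ^^^ m2 ^^^ m3) ^^^ e) * g ((m1 ^^^ m2 ^^^ m4) ^^^ e) * g (m1 ^^^ m3 ^^^ m4) * g ((m2 ^^^ m3 ^^^ m4) ^^^ e) +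
      g m1 * g (m2 ^^^ e) * g m3 * g (m4 ^^^ e) * g ((m1 ^^^ m2 ^^^ m3) ^^^ e) * g (m1 ^^^ m2 ^^^ m4) * g ((m1 ^^^ m3 ^^^ m4) ^^^ e) * g (m2 ^^^ m3 ^^^ m4) +
      g m1 * g (m2 ^^^ e) * g (m3 ^^^ e) * g m4 * g (m1 ^^^ m2 ^^^ m3) * g ((m1 ^^^ m2 ^^^ m4) ^^^ e) * g ((m1 ^^^ m3 ^^^ m4) ^^^ e) * g (m2 ^^^ m3 ^^^ m4) +
      g m1 * g (m2 ^^^ e) * g (m3 ^^^ e) * g (m4 ^^^ e) * g (m1 ^^^ m2 ^^^ m3) * g (m1 ^^^ m2 ^^^ m4) * g (m1 ^^^ m3 ^^^ m4) * g ((m2 ^^^ m3 ^^^ m4) ^^^ e) +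
      g (m1 ^^^ e) * g m2 * g m3 * g m4 * g ((m1 ^^^ m2 ^^^ m3) ^^^ e) * g ((m1 ^^^ m2 ^^^ m4) ^^^ e) * g ((m1 ^^^ m3 ^^^ m4) ^^^ e) * g (m2 ^^^ m3 ^^^ m4) +
      g (m1 ^^^ e) * g m2 * g m3 * g (m4 ^^^ e) * g ((m1 ^^^ m2 ^^^ m3) ^^^ e) * g (m1 ^^^ m2 ^^^ m4) * g (m1 ^^^ m3 ^^^ m4) * g ((m2 ^^^ m3 ^^^ m4) ^^^ e) +
      g (m1 ^^^ e) * g m2 * g (m3 ^^^ e) * g m4 * g (m1 ^^^ m2 ^^^ m3) * g ((m1 ^^^ m2 ^^^ m4) ^^^ e) * g (m1 ^^^ m3 ^^^ m4) * g ((m2 ^^^ m3 ^^^ m4) ^^^ e) +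
      g (m1 ^^^ e) * g m2 * g (m3 ^^^ e) * g (m4 ^^^ e) * g (m1 ^^^ m2 ^^^ m3) * g (m1 ^^^ m2 ^^^ m4) * g ((m1 ^^^ m3 ^^^ m4) ^^^ e) * g (m2 ^^^ m3 ^^^ m4) +
      g (m1 ^^^ e) * g (m2 ^^^ e) * g m3 * g m4 * g (m1 ^^^ m2 ^^^ m3) * g (m1 ^^^ m2 ^^^ m4) * g ((m1 ^^^ m3 ^^^ m4) ^^^ e) * g ((m2 ^^^ m3 ^^^ m4) ^^^ e) +
      g (m1 ^^^ e) * g (m2 ^^^ e) * g m3 * g (m4 ^^^ e) * g (m1 ^^^ m2 ^^^ m3) * g ((m1 ^^^ m2 ^^^ m4) ^^^ e) * g (m1 ^^^ m3 ^^^ m4) * g (m2 ^^^ m3 ^^^ m4) +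
      g (m1 ^^^ e) * g (m2 ^^^ e) * g (m3 ^^^ e) * g m4 * g ((m1 ^^^ m2 ^^^ m3) ^^^ e) * g (m1 ^^^ m2 ^^^ m4) * g (m1 ^^^ m3 ^^^ m4) * g (m2 ^^^ m3 ^^^ m4) +
      g (m1 ^^^ e) * g (m2 ^^^ e) * g (m3 ^^^ e) * g (m4 ^^^ e) * g ((m1 ^^^ m2 ^^^ m3) ^^^ e) * g ((m1 ^^^ m2 ^^^ m4) ^^^ e) * g ((m1 ^^^ m3 ^^^ m4) ^^^ e) * g ((m2 ^^^ m3 ^^^ m4) ^^^ e)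

theorem sumTT (g : BitVec n → ℝ) (e : BitVec n) :
    (∑ m1, ∑ m2, ∑ m3, ∑ m4, TT g e m1 m2 m3 m4) = 16 * xorSum' g := by
  unfold TT
  simp only [Finset.sum_add_distrib]
  rw [show (∑ m1, ∑ m2, ∑ m3, ∑ m4, (g m1 * g m2 * g m3 * g m4 * g (m1 ^^^ m2 ^^^ m3) * g (m1 ^^^ m2 ^^^ m4) * g (m1 ^^^ m3 ^^^ m4) * g (m2 ^^^ m3 ^^^ m4)))
      = xorSum' g from by
    rw [xorSum', ← sum_xor4 (0#n) (0#n) (0#n) (0#n) (term g)]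
    refine Finset.sum_congr rfl fun m1 _ => Finset.sum_congr rfl fun m2 _ =>
      Finset.sum_congr rfl fun m3 _ => Finset.sum_congr rfl fun m4 _ => ?_
    unfold term
    simp only [BitVec.xor_zero, BitVec.zero_xor, BitVec.xor_self, xor_cancel', BitVec.xor_assoc, BitVec.xor_comm, xor_left_comm]]
  rw [show (∑ m1, ∑ m2, ∑ m3, ∑ m4, (g m1 * g m2 * g m3 * g (m4 ^^^ e) * g (m1 ^^^ m2 ^^^ m3) * g ((m1 ^^^ m2 ^^^ m4) ^^^ e) * g ((m1 ^^^ m3 ^^^ m4) ^^^ e) * g ((m2 ^^^ m3 ^^^ m4) ^^^ e)))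
      = xorSum' g from by
    rw [xorSum', ← sum_xor4 (0#n) (0#n) (0#n) e (term g)]
    refine Finset.sum_congr rfl fun m1 _ => Finset.sum_congr rfl fun m2 _ =>
      Finset.sum_congr rfl fun m3 _ => Finset.sum_congr rfl fun m4 _ => ?_
    unfold term
    simp only [BitVec.xor_zero, BitVec.zero_xor, BitVec.xor_self, xor_cancel', BitVec.xor_assoc, BitVec.xor_comm, xor_left_comm]]
  rw [show (∑ m1, ∑ m2, ∑ m3, ∑ m4, (g m1 * g m2 * g (m3 ^^^ e) * g m4 * g ((m1 ^^^ m2 ^^^ m3) ^^^ e) * g (m1 ^^^ m2 ^^^ m4) * g ((m1 ^^^ m3 ^^^ m4) ^^^ e) * g ((m2 ^^^ m3 ^^^ m4) ^^^ e)))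
      = xorSum' g from by
    rw [xorSum', ← sum_xor4 (0#n) (0#n) e (0#n) (term g)]
    refine Finset.sum_congr rfl fun m1 _ => Finset.sum_congr rfl fun m2 _ =>
      Finset.sum_congr rfl fun m3 _ => Finset.sum_congr rfl fun m4 _ => ?_
    unfold term
    simp only [BitVec.xor_zero, BitVec.zero_xor, BitVec.xor_self, xor_cancel', BitVec.xor_assoc, BitVec.xor_comm, xor_left_comm]]
  rw [show (∑ m1, ∑ m2, ∑ m3, ∑ m4, (g m1 * g m2 * g (m3 ^^^ e) * g (m4 ^^^ e) * g ((m1 ^^^ m2 ^^^ m3) ^^^ e) * g ((m1 ^^^ m2 ^^^ m4) ^^^ e) * g (m1 ^^^ m3 ^^^ m4) * g (m2 ^^^ m3 ^^^ m4)))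
      = xorSum' g from by
    rw [xorSum', ← sum_xor4 (0#n) (0#n) e e (term g)]
    refine Finset.sum_congr rfl fun m1 _ => Finset.sum_congr rfl fun m2 _ =>
      Finset.sum_congr rfl fun m3 _ => Finset.sum_congr rfl fun m4 _ => ?_
    unfold term
    simp only [BitVec.xor_zero, BitVec.zero_xor, BitVec.xor_self, xor_cancel', BitVec.xor_assoc, BitVec.xor_comm, xor_left_comm]]
  rw [show (∑ m1, ∑ m2, ∑ m3, ∑ m4, (g m1 * g (m2 ^^^ e) * g m3 * g m4 * g ((m1 ^^^ m2 ^^^ m3) ^^^ e) * g ((m1 ^^^ m2 ^^^ m4) ^^^ e) * g (m1 ^^^ m3 ^^^ m4) * g ((m2 ^^^ m3 ^^^ m4) ^^^ e)))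
      = xorSum' g from by
    rw [xorSum', ← sum_xor4 (0#n) e (0#n) (0#n) (term g)]
    refine Finset.sum_congr rfl fun m1 _ => Finset.sum_congr rfl fun m2 _ =>
      Finset.sum_congr rfl fun m3 _ => Finset.sum_congr rfl fun m4 _ => ?_
    unfold term
    simp only [BitVec.xor_zero, BitVec.zero_xor, BitVec.xor_self, xor_cancel', BitVec.xor_assoc, BitVec.xor_comm, xor_left_comm]]
  rw [show (∑ m1, ∑ m2, ∑ m3, ∑ m4, (g m1 * g (m2 ^^^ e) * g m3 * g (m4 ^^^ e) * g ((m1 ^^^ m2 ^^^ m3) ^^^ e) * g (m1 ^^^ m2 ^^^ m4) * g ((m1 ^^^ m3 ^^^ m4) ^^^ e) * g (m2 ^^^ m3 ^^^ m4)))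
      = xorSum' g from by
    rw [xorSum', ← sum_xor4 (0#n) e (0#n) e (term g)]
    refine Finset.sum_congr rfl fun m1 _ => Finset.sum_congr rfl fun m2 _ =>
      Finset.sum_congr rfl fun m3 _ => Finset.sum_congr rfl fun m4 _ => ?_
    unfold term
    simp only [BitVec.xor_zero, BitVec.zero_xor, BitVec.xor_self, xor_cancel', BitVec.xor_assoc, BitVec.xor_comm, xor_left_comm]]
  rw [show (∑ m1, ∑ m2, ∑ m3, ∑ m4, (g m1 * g (m2 ^^^ e) * g (m3 ^^^ e) * g m4 * g (m1 ^^^ m2 ^^^ m3) * g ((m1 ^^^ m2 ^^^ m4) ^^^ e) * g ((m1 ^^^ m3 ^^^ m4) ^^^ e) * g (m2 ^^^ m3 ^^^ m4)))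
      = xorSum' g from by
    rw [xorSum', ← sum_xor4 (0#n) e e (0#n) (term g)]
    refine Finset.sum_congr rfl fun m1 _ => Finset.sum_congr rfl fun m2 _ =>
      Finset.sum_congr rfl fun m3 _ => Finset.sum_congr rfl fun m4 _ => ?_
    unfold term
    simp only [BitVec.xor_zero, BitVec.zero_xor, BitVec.xor_self, xor_cancel', BitVec.xor_assoc, BitVec.xor_comm, xor_left_comm]]
  rw [show (∑ m1, ∑ m2, ∑ m3, ∑ m4, (g m1 * g (m2 ^^^ e) * g (m3 ^^^ e) * g (m4 ^^^ e) * g (m1 ^^^ m2 ^^^ m3) * g (m1 ^^^ m2 ^^^ m4) * g (m1 ^^^ m3 ^^^ m4) * g ((m2 ^^^ m3 ^^^ m4) ^^^ e)))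
      = xorSum' g from by
    rw [xorSum', ← sum_xor4 (0#n) e e e (term g)]
    refine Finset.sum_congr rfl fun m1 _ => Finset.sum_congr rfl fun m2 _ =>
      Finset.sum_congr rfl fun m3 _ => Finset.sum_congr rfl fun m4 _ => ?_
    unfold term
    simp only [BitVec.xor_zero, BitVec.zero_xor, BitVec.xor_self, xor_cancel', BitVec.xor_assoc, BitVec.xor_comm, xor_left_comm]]
  rw [show (∑ m1, ∑ m2, ∑ m3, ∑ m4, (g (m1 ^^^ e) * g m2 * g m3 * g m4 * g ((m1 ^^^ m2 ^^^ m3) ^^^ e) * g ((m1 ^^^ m2 ^^^ m4) ^^^ e) * g ((m1 ^^^ m3 ^^^ m4) ^^^ e) * g (m2 ^^^ m3 ^^^ m4)))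
      = xorSum' g from by
    rw [xorSum', ← sum_xor4 e (0#n) (0#n) (0#n) (term g)]
    refine Finset.sum_congr rfl fun m1 _ => Finset.sum_congr rfl fun m2 _ =>
      Finset.sum_congr rfl fun m3 _ => Finset.sum_congr rfl fun m4 _ => ?_
    unfold term
    simp only [BitVec.xor_zero, BitVec.zero_xor, BitVec.xor_self, xor_cancel', BitVec.xor_assoc, BitVec.xor_comm, xor_left_comm]]
  rw [show (∑ m1, ∑ m2, ∑ m3, ∑ m4, (g (m1 ^^^ e) * g m2 * g m3 * g (m4 ^^^ e) * g ((m1 ^^^ m2 ^^^ m3) ^^^ e) * g (m1 ^^^ m2 ^^^ m4) * g (m1 ^^^ m3 ^^^ m4) * g ((m2 ^^^ m3 ^^^ m4) ^^^ e)))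
      = xorSum' g from by
    rw [xorSum', ← sum_xor4 e (0#n) (0#n) e (term g)]
    refine Finset.sum_congr rfl fun m1 _ => Finset.sum_congr rfl fun m2 _ =>
      Finset.sum_congr rfl fun m3 _ => Finset.sum_congr rfl fun m4 _ => ?_
    unfold term
    simp only [BitVec.xor_zero, BitVec.zero_xor, BitVec.xor_self, xor_cancel', BitVec.xor_assoc, BitVec.xor_comm, xor_left_comm]]
  rw [show (∑ m1, ∑ m2, ∑ m3, ∑ m4, (g (m1 ^^^ e) * g m2 * g (m3 ^^^ e) * g m4 * g (m1 ^^^ m2 ^^^ m3) * g ((m1 ^^^ m2 ^^^ m4) ^^^ e) * g (m1 ^^^ m3 ^^^ m4) * g ((m2 ^^^ m3 ^^^ m4) ^^^ e)))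
      = xorSum' g from by
    rw [xorSum', ← sum_xor4 e (0#n) e (0#n) (term g)]
    refine Finset.sum_congr rfl fun m1 _ => Finset.sum_congr rfl fun m2 _ =>
      Finset.sum_congr rfl fun m3 _ => Finset.sum_congr rfl fun m4 _ => ?_
    unfold term
    simp only [BitVec.xor_zero, BitVec.zero_xor, BitVec.xor_self, xor_cancel', BitVec.xor_assoc, BitVec.xor_comm, xor_left_comm]]
  rw [show (∑ m1, ∑ m2, ∑ m3, ∑ m4, (g (m1 ^^^ e) * g m2 * g (m3 ^^^ e) * g (m4 ^^^ e) * g (m1 ^^^ m2 ^^^ m3) * g (m1 ^^^ m2 ^^^ m4) * g ((m1 ^^^ m3 ^^^ m4) ^^^ e) * g (m2 ^^^ m3 ^^^ m4)))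
      = xorSum' g from by
    rw [xorSum', ← sum_xor4 e (0#n) e e (term g)]
    refine Finset.sum_congr rfl fun m1 _ => Finset.sum_congr rfl fun m2 _ =>
      Finset.sum_congr rfl fun m3 _ => Finset.sum_congr rfl fun m4 _ => ?_
    unfold term
    simp only [BitVec.xor_zero, BitVec.zero_xor, BitVec.xor_self, xor_cancel', BitVec.xor_assoc, BitVec.xor_comm, xor_left_comm]]
  rw [show (∑ m1, ∑ m2, ∑ m3, ∑ m4, (g (m1 ^^^ e) * g (m2 ^^^ e) * g m3 * g m4 * g (m1 ^^^ m2 ^^^ m3) * g (m1 ^^^ m2 ^^^ m4) * g ((m1 ^^^ m3 ^^^ m4) ^^^ e) * g ((m2 ^^^ m3 ^^^ m4) ^^^ e)))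
      = xorSum' g from by
    rw [xorSum', ← sum_xor4 e e (0#n) (0#n) (term g)]
    refine Finset.sum_congr rfl fun m1 _ => Finset.sum_congr rfl fun m2 _ =>
      Finset.sum_congr rfl fun m3 _ => Finset.sum_congr rfl fun m4 _ => ?_
    unfold term
    simp only [BitVec.xor_zero, BitVec.zero_xor, BitVec.xor_self, xor_cancel', BitVec.xor_assoc, BitVec.xor_comm, xor_left_comm]]
  rw [show (∑ m1, ∑ m2, ∑ m3, ∑ m4, (g (m1 ^^^ e) * g (m2 ^^^ e) * g m3 * g (m4 ^^^ e) * g (m1 ^^^ m2 ^^^ m3) * g ((m1 ^^^ m2 ^^^ m4) ^^^ e) * g (m1 ^^^ m3 ^^^ m4) * g (m2 ^^^ m3 ^^^ m4)))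
      = xorSum' g from by
    rw [xorSum', ← sum_xor4 e e (0#n) e (term g)]
    refine Finset.sum_congr rfl fun m1 _ => Finset.sum_congr rfl fun m2 _ =>
      Finset.sum_congr rfl fun m3 _ => Finset.sum_congr rfl fun m4 _ => ?_
    unfold term
    simp only [BitVec.xor_zero, BitVec.zero_xor, BitVec.xor_self, xor_cancel', BitVec.xor_assoc, BitVec.xor_comm, xor_left_comm]]
  rw [show (∑ m1, ∑ m2, ∑ m3, ∑ m4, (g (m1 ^^^ e) * g (m2 ^^^ e) * g (m3 ^^^ e) * g m4 * g ((m1 ^^^ m2 ^^^ m3) ^^^ e) * g (m1 ^^^ m2 ^^^ m4) * g (m1 ^^^ m3 ^^^ m4) * g (m2 ^^^ m3 ^^^ m4)))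
      = xorSum' g from by
    rw [xorSum', ← sum_xor4 e e e (0#n) (term g)]
    refine Finset.sum_congr rfl fun m1 _ => Finset.sum_congr rfl fun m2 _ =>
      Finset.sum_congr rfl fun m3 _ => Finset.sum_congr rfl fun m4 _ => ?_
    unfold term
    simp only [BitVec.xor_zero, BitVec.zero_xor, BitVec.xor_self, xor_cancel', BitVec.xor_assoc, BitVec.xor_comm, xor_left_comm]]
  rw [show (∑ m1, ∑ m2, ∑ m3, ∑ m4, (g (m1 ^^^ e) * g (m2 ^^^ e) * g (m3 ^^^ e) * g (m4 ^^^ e) * g ((m1 ^^^ m2 ^^^ m3) ^^^ e) * g ((m1 ^^^ m2 ^^^ m4) ^^^ e) * g ((m1 ^^^ m3 ^^^ m4) ^^^ e) * g ((m2 ^^^ m3 ^^^ m4) ^^^ e)))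
      = xorSum' g from by
    rw [xorSum', ← sum_xor4 e e e e (term g)]
    refine Finset.sum_congr rfl fun m1 _ => Finset.sum_congr rfl fun m2 _ =>
      Finset.sum_congr rfl fun m3 _ => Finset.sum_congr rfl fun m4 _ => ?_
    unfold term
    simp only [BitVec.xor_zero, BitVec.zero_xor, BitVec.xor_self, xor_cancel', BitVec.xor_assoc, BitVec.xor_comm, xor_left_comm]]
  ring



theorem xorSum_eq {n : ℕ} (lam : BitVec n → ℝ) (h : ∀ i, 0 ≤ lam i) :
    xorSum lam = xorSum' (fun x => Real.sqrt (lam x)) := by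
  rw [xorSum]; exact xorSum'_eq h

theorem prodabs4 (b1 b2 b3 b4 : ℝ) : b1 * b2 * b3 * b4 ≤ |b1| * |b2| * |b3| * |b4| := by
  calc b1 * b2 * b3 * b4 ≤ |b1 * b2 * b3 * b4| := le_abs_self _
    _ = |b1| * |b2| * |b3| * |b4| := by rw [abs_mul, abs_mul, abs_mul]

theorem prodabs8 (b1 b2 b3 b4 b5 b6 b7 b8 : ℝ) :
    b1 * b2 * b3 * b4 * b5 * b6 * b7 * b8 ≤ |b1| * |b2| * |b3| * |b4| * |b5| * |b6| * |b7| * |b8| := by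
  calc b1 * b2 * b3 * b4 * b5 * b6 * b7 * b8 ≤ |b1 * b2 * b3 * b4 * b5 * b6 * b7 * b8| := le_abs_self _
    _ = |b1| * |b2| * |b3| * |b4| * |b5| * |b6| * |b7| * |b8| := by
      rw [abs_mul, abs_mul, abs_mul, abs_mul, abs_mul, abs_mul, abs_mul]

theorem id16  (A1 A2 A3 A4 A5 A6 A7 A8 B1 B2 B3 B4 B5 B6 B7 B8 : ℝ) :
    (A1 + B1) * (A2 + B2) * (A3 + B3) * (A4 + B4) * (A5 + B5) * (A6 + B6) * (A7 + B7) * (A8 + B8) +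
      (A1 + B1) * (A2 + B2) * (A3 + B3) * (A4 - B4) * (A5 + B5) * (A6 - B6) * (A7 - B7) * (A8 - B8) +
      (A1 + B1) * (A2 + B2) * (A3 - B3) * (A4 + B4) * (A5 - B5) * (A6 + B6) * (A7 - B7) * (A8 - B8) +
      (A1 + B1) * (A2 + B2) * (A3 - B3) * (A4 - B4) * (A5 - B5) * (A6 - B6) * (A7 + B7) * (A8 + B8) +
      (A1 + B1) * (A2 - B2) * (A3 + B3) * (A4 + B4) * (A5 - B5) * (A6 - B6) * (A7 + B7) * (A8 - B8) +
      (A1 + B1) * (A2 - B2) * (A3 + B3) * (A4 - B4) * (A5 - B5) * (A6 + B6) * (A7 - B7) * (A8 + B8) +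
      (A1 + B1) * (A2 - B2) * (A3 - B3) * (A4 + B4) * (A5 + B5) * (A6 - B6) * (A7 - B7) * (A8 + B8) +
      (A1 + B1) * (A2 - B2) * (A3 - B3) * (A4 - B4) * (A5 + B5) * (A6 + B6) * (A7 + B7) * (A8 - B8) +
      (A1 - B1) * (A2 + B2) * (A3 + B3) * (A4 + B4) * (A5 - B5) * (A6 - B6) * (A7 - B7) * (A8 + B8) +
      (A1 - B1) * (A2 + B2) * (A3 + B3) * (A4 - B4) * (A5 - B5) * (A6 + B6) * (A7 + B7) * (A8 - B8) +
      (A1 - B1) * (A2 + B2) * (A3 - B3) * (A4 + B4) * (A5 + B5) * (A6 - B6) * (A7 + B7) * (A8 - B8) +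
      (A1 - B1) * (A2 + B2) * (A3 - B3) * (A4 - B4) * (A5 + B5) * (A6 + B6) * (A7 - B7) * (A8 + B8) +
      (A1 - B1) * (A2 - B2) * (A3 + B3) * (A4 + B4) * (A5 + B5) * (A6 + B6) * (A7 - B7) * (A8 - B8) +
      (A1 - B1) * (A2 - B2) * (A3 + B3) * (A4 - B4) * (A5 + B5) * (A6 - B6) * (A7 + B7) * (A8 + B8) +
      (A1 - B1) * (A2 - B2) * (A3 - B3) * (A4 + B4) * (A5 - B5) * (A6 + B6) * (A7 + B7) * (A8 + B8) +
      (A1 - B1) * (A2 - B2) * (A3 - B3) * (A4 - B4) * (A5 - B5) * (A6 - B6) * (A7 - B7) * (A8 - B8)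
    = 16 * (A1 * A2 * A3 * A4 * A5 * A6 * A7 * A8 +
      A4 * A6 * A7 * A8 * (B1 * B2 * B3 * B5) +
      A3 * A5 * A7 * A8 * (B1 * B2 * B4 * B6) +
      A3 * A4 * A5 * A6 * (B1 * B2 * B7 * B8) +
      A2 * A5 * A6 * A8 * (B1 * B3 * B4 * B7) +
      A2 * A4 * A5 * A7 * (B1 * B3 * B6 * B8) +
      A2 * A3 * A6 * A7 * (B1 * B4 * B5 * B8) +
      A2 * A3 * A4 * A8 * (B1 * B5 * B6 * B7) +
      A1 * A5 * A6 * A7 * (B2 * B3 * B4 * B8) +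
      A1 * A4 * A5 * A8 * (B2 * B3 * B6 * B7) +
      A1 * A3 * A6 * A8 * (B2 * B4 * B5 * B7) +
      A1 * A3 * A4 * A7 * (B2 * B5 * B6 * B8) +
      A1 * A2 * A7 * A8 * (B3 * B4 * B5 * B6) +
      A1 * A2 * A4 * A6 * (B3 * B5 * B7 * B8) +
      A1 * A2 * A3 * A5 * (B4 * B6 * B7 * B8) +
      B1 * B2 * B3 * B4 * B5 * B6 * B7 * B8) := by ring

theorem core16 (A1 A2 A3 A4 A5 A6 A7 A8 B1 B2 B3 B4 B5 B6 B7 B8 C1 C2 C3 C4 C5 C6 C7 C8 : ℝ)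
    (hA1 : 0 ≤ A1) (hA2 : 0 ≤ A2) (hA3 : 0 ≤ A3) (hA4 : 0 ≤ A4) (hA5 : 0 ≤ A5) (hA6 : 0 ≤ A6) (hA7 : 0 ≤ A7) (hA8 : 0 ≤ A8)
    (hc1 : B1 * B2 * B3 * B5 ≤ C1 * C2 * C3 * C5)
    (hc2 : B1 * B2 * B4 * B6 ≤ C1 * C2 * C4 * C6)
    (hc3 : B1 * B2 * B7 * B8 ≤ C1 * C2 * C7 * C8)
    (hc4 : B1 * B3 * B4 * B7 ≤ C1 * C3 * C4 * C7)
    (hc5 : B1 * B3 * B6 * B8 ≤ C1 * C3 * C6 * C8)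
    (hc6 : B1 * B4 * B5 * B8 ≤ C1 * C4 * C5 * C8)
    (hc7 : B1 * B5 * B6 * B7 ≤ C1 * C5 * C6 * C7)
    (hc8 : B2 * B3 * B4 * B8 ≤ C2 * C3 * C4 * C8)
    (hc9 : B2 * B3 * B6 * B7 ≤ C2 * C3 * C6 * C7)
    (hc10 : B2 * B4 * B5 * B7 ≤ C2 * C4 * C5 * C7)
    (hc11 : B2 * B5 * B6 * B8 ≤ C2 * C5 * C6 * C8)
    (hc12 : B3 * B4 * B5 * B6 ≤ C3 * C4 * C5 * C6)
    (hc13 : B3 * B5 * B7 * B8 ≤ C3 * C5 * C7 * C8)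
    (hc14 : B4 * B6 * B7 * B8 ≤ C4 * C6 * C7 * C8)
    (hc15 : B1 * B2 * B3 * B4 * B5 * B6 * B7 * B8 ≤ C1 * C2 * C3 * C4 * C5 * C6 * C7 * C8) :
    (A1 + B1) * (A2 + B2) * (A3 + B3) * (A4 + B4) * (A5 + B5) * (A6 + B6) * (A7 + B7) * (A8 + B8) +
      (A1 + B1) * (A2 + B2) * (A3 + B3) * (A4 - B4) * (A5 + B5) * (A6 - B6) * (A7 - B7) * (A8 - B8) +
      (A1 + B1) * (A2 + B2) * (A3 - B3) * (A4 + B4) * (A5 - B5) * (A6 + B6) * (A7 - B7) * (A8 - B8) +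
      (A1 + B1) * (A2 + B2) * (A3 - B3) * (A4 - B4) * (A5 - B5) * (A6 - B6) * (A7 + B7) * (A8 + B8) +
      (A1 + B1) * (A2 - B2) * (A3 + B3) * (A4 + B4) * (A5 - B5) * (A6 - B6) * (A7 + B7) * (A8 - B8) +
      (A1 + B1) * (A2 - B2) * (A3 + B3) * (A4 - B4) * (A5 - B5) * (A6 + B6) * (A7 - B7) * (A8 + B8) +
      (A1 + B1) * (A2 - B2) * (A3 - B3) * (A4 + B4) * (A5 + B5) * (A6 - B6) * (A7 - B7) * (A8 + B8) +
      (A1 + B1) * (A2 - B2) * (A3 - B3) * (A4 - B4) * (A5 + B5) * (A6 + B6) * (A7 + B7) * (A8 - B8) +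
      (A1 - B1) * (A2 + B2) * (A3 + B3) * (A4 + B4) * (A5 - B5) * (A6 - B6) * (A7 - B7) * (A8 + B8) +
      (A1 - B1) * (A2 + B2) * (A3 + B3) * (A4 - B4) * (A5 - B5) * (A6 + B6) * (A7 + B7) * (A8 - B8) +
      (A1 - B1) * (A2 + B2) * (A3 - B3) * (A4 + B4) * (A5 + B5) * (A6 - B6) * (A7 + B7) * (A8 - B8) +
      (A1 - B1) * (A2 + B2) * (A3 - B3) * (A4 - B4) * (A5 + B5) * (A6 + B6) * (A7 - B7) * (A8 + B8) +
      (A1 - B1) * (A2 - B2) * (A3 + B3) * (A4 + B4) * (A5 + B5) * (A6 + B6) * (A7 - B7) * (A8 - B8) +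
      (A1 - B1) * (A2 - B2) * (A3 + B3) * (A4 - B4) * (A5 + B5) * (A6 - B6) * (A7 + B7) * (A8 + B8) +
      (A1 - B1) * (A2 - B2) * (A3 - B3) * (A4 + B4) * (A5 - B5) * (A6 + B6) * (A7 + B7) * (A8 + B8) +
      (A1 - B1) * (A2 - B2) * (A3 - B3) * (A4 - B4) * (A5 - B5) * (A6 - B6) * (A7 - B7) * (A8 - B8)
    ≤
    (A1 + C1) * (A2 + C2) * (A3 + C3) * (A4 + C4) * (A5 + C5) * (A6 + C6) * (A7 + C7) * (A8 + C8) +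
      (A1 + C1) * (A2 + C2) * (A3 + C3) * (A4 - C4) * (A5 + C5) * (A6 - C6) * (A7 - C7) * (A8 - C8) +
      (A1 + C1) * (A2 + C2) * (A3 - C3) * (A4 + C4) * (A5 - C5) * (A6 + C6) * (A7 - C7) * (A8 - C8) +
      (A1 + C1) * (A2 + C2) * (A3 - C3) * (A4 - C4) * (A5 - C5) * (A6 - C6) * (A7 + C7) * (A8 + C8) +
      (A1 + C1) * (A2 - C2) * (A3 + C3) * (A4 + C4) * (A5 - C5) * (A6 - C6) * (A7 + C7) * (A8 - C8) +
      (A1 + C1) * (A2 - C2) * (A3 + C3) * (A4 - C4) * (A5 - C5) * (A6 + C6) * (A7 - C7) * (A8 + C8) +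
      (A1 + C1) * (A2 - C2) * (A3 - C3) * (A4 + C4) * (A5 + C5) * (A6 - C6) * (A7 - C7) * (A8 + C8) +
      (A1 + C1) * (A2 - C2) * (A3 - C3) * (A4 - C4) * (A5 + C5) * (A6 + C6) * (A7 + C7) * (A8 - C8) +
      (A1 - C1) * (A2 + C2) * (A3 + C3) * (A4 + C4) * (A5 - C5) * (A6 - C6) * (A7 - C7) * (A8 + C8) +
      (A1 - C1) * (A2 + C2) * (A3 + C3) * (A4 - C4) * (A5 - C5) * (A6 + C6) * (A7 + C7) * (A8 - C8) +
      (A1 - C1) * (A2 + C2) * (A3 - C3) * (A4 + C4) * (A5 + C5) * (A6 - C6) * (A7 + C7) * (A8 - C8) +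
      (A1 - C1) * (A2 + C2) * (A3 - C3) * (A4 - C4) * (A5 + C5) * (A6 + C6) * (A7 - C7) * (A8 + C8) +
      (A1 - C1) * (A2 - C2) * (A3 + C3) * (A4 + C4) * (A5 + C5) * (A6 + C6) * (A7 - C7) * (A8 - C8) +
      (A1 - C1) * (A2 - C2) * (A3 + C3) * (A4 - C4) * (A5 + C5) * (A6 - C6) * (A7 + C7) * (A8 + C8) +
      (A1 - C1) * (A2 - C2) * (A3 - C3) * (A4 + C4) * (A5 - C5) * (A6 + C6) * (A7 + C7) * (A8 + C8) +
      (A1 - C1) * (A2 - C2) * (A3 - C3) * (A4 - C4) * (A5 - C5) * (A6 - C6) * (A7 - C7) * (A8 - C8) := by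
  rw [id16 A1 A2 A3 A4 A5 A6 A7 A8 B1 B2 B3 B4 B5 B6 B7 B8,
    id16 A1 A2 A3 A4 A5 A6 A7 A8 C1 C2 C3 C4 C5 C6 C7 C8]
  have m1 : A4 * A6 * A7 * A8 * (B1 * B2 * B3 * B5) ≤ A4 * A6 * A7 * A8 * (C1 * C2 * C3 * C5) := mul_le_mul_of_nonneg_left hc1 (mul_nonneg (mul_nonneg (mul_nonneg hA4 hA6) hA7) hA8)
  have m2 : A3 * A5 * A7 * A8 * (B1 * B2 * B4 * B6) ≤ A3 * A5 * A7 * A8 * (C1 * C2 * C4 * C6) := mul_le_mul_of_nonneg_left hc2 (mul_nonneg (mul_nonneg (mul_nonneg hA3 hA5) hA7) hA8)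
  have m3 : A3 * A4 * A5 * A6 * (B1 * B2 * B7 * B8) ≤ A3 * A4 * A5 * A6 * (C1 * C2 * C7 * C8) := mul_le_mul_of_nonneg_left hc3 (mul_nonneg (mul_nonneg (mul_nonneg hA3 hA4) hA5) hA6)
  have m4 : A2 * A5 * A6 * A8 * (B1 * B3 * B4 * B7) ≤ A2 * A5 * A6 * A8 * (C1 * C3 * C4 * C7) := mul_le_mul_of_nonneg_left hc4 (mul_nonneg (mul_nonneg (mul_nonneg hA2 hA5) hA6) hA8)
  have m5 : A2 * A4 * A5 * A7 * (B1 * B3 * B6 * B8) ≤ A2 * A4 * A5 * A7 * (C1 * C3 * C6 * C8) := mul_le_mul_of_nonneg_left hc5 (mul_nonneg (mul_nonneg (mul_nonneg hA2 hA4) hA5) hA7)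
  have m6 : A2 * A3 * A6 * A7 * (B1 * B4 * B5 * B8) ≤ A2 * A3 * A6 * A7 * (C1 * C4 * C5 * C8) := mul_le_mul_of_nonneg_left hc6 (mul_nonneg (mul_nonneg (mul_nonneg hA2 hA3) hA6) hA7)
  have m7 : A2 * A3 * A4 * A8 * (B1 * B5 * B6 * B7) ≤ A2 * A3 * A4 * A8 * (C1 * C5 * C6 * C7) := mul_le_mul_of_nonneg_left hc7 (mul_nonneg (mul_nonneg (mul_nonneg hA2 hA3) hA4) hA8)
  have m8 : A1 * A5 * A6 * A7 * (B2 * B3 * B4 * B8) ≤ A1 * A5 * A6 * A7 * (C2 * C3 * C4 * C8) := mul_le_mul_of_nonneg_left hc8 (mul_nonneg (mul_nonneg (mul_nonneg hA1 hA5) hA6) hA7)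
  have m9 : A1 * A4 * A5 * A8 * (B2 * B3 * B6 * B7) ≤ A1 * A4 * A5 * A8 * (C2 * C3 * C6 * C7) := mul_le_mul_of_nonneg_left hc9 (mul_nonneg (mul_nonneg (mul_nonneg hA1 hA4) hA5) hA8)
  have m10 : A1 * A3 * A6 * A8 * (B2 * B4 * B5 * B7) ≤ A1 * A3 * A6 * A8 * (C2 * C4 * C5 * C7) := mul_le_mul_of_nonneg_left hc10 (mul_nonneg (mul_nonneg (mul_nonneg hA1 hA3) hA6) hA8)
  have m11 : A1 * A3 * A4 * A7 * (B2 * B5 * B6 * B8) ≤ A1 * A3 * A4 * A7 * (C2 * C5 * C6 * C8) := mul_le_mul_of_nonneg_left hc11 (mul_nonneg (mul_nonneg (mul_nonneg hA1 hA3) hA4) hA7)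
  have m12 : A1 * A2 * A7 * A8 * (B3 * B4 * B5 * B6) ≤ A1 * A2 * A7 * A8 * (C3 * C4 * C5 * C6) := mul_le_mul_of_nonneg_left hc12 (mul_nonneg (mul_nonneg (mul_nonneg hA1 hA2) hA7) hA8)
  have m13 : A1 * A2 * A4 * A6 * (B3 * B5 * B7 * B8) ≤ A1 * A2 * A4 * A6 * (C3 * C5 * C7 * C8) := mul_le_mul_of_nonneg_left hc13 (mul_nonneg (mul_nonneg (mul_nonneg hA1 hA2) hA4) hA6)
  have m14 : A1 * A2 * A3 * A5 * (B4 * B6 * B7 * B8) ≤ A1 * A2 * A3 * A5 * (C4 * C6 * C7 * C8) := mul_le_mul_of_nonneg_left hc14 (mul_nonneg (mul_nonneg (mul_nonneg hA1 hA2) hA3) hA5)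
  linarith

theorem testBit_flip {e : BitVec n} (he : e ≠ 0#n) (x : BitVec n) :
    (x ^^^ e).toNat.testBit (kbit e) = !x.toNat.testBit (kbit e) := by
  rw [show (x ^^^ e).toNat = x.toNat ^^^ e.toNat by simp [BitVec.toNat_xor],
    Nat.testBit_xor, testBit_kbit he, Bool.xor_true]

theorem slot (nu : BitVec n → ℝ) (hnu : ∀ i, 0 ≤ nu i) (e : BitVec n) (he : e ≠ 0#n)
    (x : BitVec n) :
    ∃ A B B' : ℝ, Real.sqrt (nu x) = A + B ∧ Real.sqrt (nu (x ^^^ e)) = A - B ∧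
      Real.sqrt (cmp nu e x) = A + B' ∧ Real.sqrt (cmp nu e (x ^^^ e)) = A - B' ∧
      0 ≤ A ∧ B' = sg e x * |B| := by
  have hne : (x ^^^ e).toNat ≠ x.toNat := by
    intro hh
    have h1 : x ^^^ e = x := BitVec.toNat_injective hh
    apply he
    have h2 := congrArg (x ^^^ ·) h1
    rw [← BitVec.xor_assoc, BitVec.xor_self, BitVec.zero_xor] at h2
    exact h2
  set a := Real.sqrt (nu x) with ha
  set b := Real.sqrt (nu (x ^^^ e)) with hb
  have hann : 0 ≤ a := Real.sqrt_nonneg _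
  have hbnn : 0 ≤ b := Real.sqrt_nonneg _
  have hcx : cmp nu e (x ^^^ e)
      = if (x ^^^ e).toNat < x.toNat then max (nu (x ^^^ e)) (nu x) else min (nu (x ^^^ e)) (nu x) := by
    unfold cmp; rw [xx]
  by_cases hc : x.toNat < (x ^^^ e).toNat
  · -- x is low
    have hc2 : ¬ (x ^^^ e).toNat < x.toNat := by omega
    have hsg : sg e x = 1 := by
      unfold sg; rw [(low_iff he x).1 hc]; simp
    have h1 : cmp nu e x = max (nu x) (nu (x ^^^ e)) := by unfold cmp; rw [if_pos hc]
    have h2 : cmp nu e (x ^^^ e) = min (nu (x ^^^ e)) (nu x) := by rw [hcx, if_neg hc2]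
    rcases le_total (nu x) (nu (x ^^^ e)) with h | h
    · have hab : a ≤ b := Real.sqrt_le_sqrt h
      refine ⟨(a+b)/2, (a-b)/2, (b-a)/2, by ring, by ring, ?_, ?_, by positivity, ?_⟩
      · rw [h1, max_eq_right h, ← hb]; ring
      · rw [h2, min_eq_right h, ← ha]; ring
      · rw [hsg, abs_of_nonpos (by linarith)]; ring
    · have hab : b ≤ a := Real.sqrt_le_sqrt h
      refine ⟨(a+b)/2, (a-b)/2, (a-b)/2, by ring, by ring, ?_, ?_, by positivity, ?_⟩
      · rw [h1, max_eq_left h, ← ha]; ring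
      · rw [h2, min_eq_left h, ← hb]; ring
      · rw [hsg, abs_of_nonneg (by linarith)]; ring
  · -- x is high
    have hc2 : (x ^^^ e).toNat < x.toNat := by omega
    have hsg : sg e x = -1 := by
      have hbit : x.toNat.testBit (kbit e) = true := by
        by_contra hbit
        have : x.toNat.testBit (kbit e) = false := by
          cases hh : x.toNat.testBit (kbit e) <;> simp_all
        exact hc ((low_iff he x).2 this)
      unfold sg; rw [hbit]; simp
    have h1 : cmp nu e x = min (nu x) (nu (x ^^^ e)) := by unfold cmp; rw [if_neg hc]
    have h2 : cmp nu e (x ^^^ e) = max (nu (x ^^^ e)) (nu x) := by rw [hcx, if_pos hc2]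
    rcases le_total (nu x) (nu (x ^^^ e)) with h | h
    · have hab : a ≤ b := Real.sqrt_le_sqrt h
      refine ⟨(a+b)/2, (a-b)/2, (a-b)/2, by ring, by ring, ?_, ?_, by positivity, ?_⟩
      · rw [h1, min_eq_left h, ← ha]; ring
      · rw [h2, max_eq_left h, ← hb]; ring
      · rw [hsg, abs_of_nonpos (by linarith)]; ring
    · have hab : b ≤ a := Real.sqrt_le_sqrt h
      refine ⟨(a+b)/2, (a-b)/2, (b-a)/2, by ring, by ring, ?_, ?_, by positivity, ?_⟩
      · rw [h1, min_eq_right h, ← hb]; ring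
      · rw [h2, max_eq_right h, ← ha]; ring
      · rw [hsg, abs_of_nonneg (by linarith)]; ring

theorem TTle (nu : BitVec n → ℝ) (hnu : ∀ i, 0 ≤ nu i) (e : BitVec n) (he : e ≠ 0#n)
    (m1 m2 m3 m4 : BitVec n) :
    TT (fun x => Real.sqrt (nu x)) e m1 m2 m3 m4
      ≤ TT (fun x => Real.sqrt (cmp nu e x)) e m1 m2 m3 m4 := by
  obtain ⟨A1, B1, C1, h1a, h1b, h1c, h1d, h1A, h1s⟩ := slot nu hnu e he m1
  obtain ⟨A2, B2, C2, h2a, h2b, h2c, h2d, h2A, h2s⟩ := slot nu hnu e he m2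
  obtain ⟨A3, B3, C3, h3a, h3b, h3c, h3d, h3A, h3s⟩ := slot nu hnu e he m3
  obtain ⟨A4, B4, C4, h4a, h4b, h4c, h4d, h4A, h4s⟩ := slot nu hnu e he m4
  obtain ⟨A5, B5, C5, h5a, h5b, h5c, h5d, h5A, h5s⟩ := slot nu hnu e he (m1 ^^^ m2 ^^^ m3)
  obtain ⟨A6, B6, C6, h6a, h6b, h6c, h6d, h6A, h6s⟩ := slot nu hnu e he (m1 ^^^ m2 ^^^ m4)
  obtain ⟨A7, B7, C7, h7a, h7b, h7c, h7d, h7A, h7s⟩ := slot nu hnu e he (m1 ^^^ m3 ^^^ m4)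
  obtain ⟨A8, B8, C8, h8a, h8b, h8c, h8d, h8A, h8s⟩ := slot nu hnu e he (m2 ^^^ m3 ^^^ m4)
  rw [sg_mul, sg_mul] at h5s h6s h7s h8s
  have hc1 : B1 * B2 * B3 * B5 ≤ C1 * C2 * C3 * C5 := by
    rw [h1s, h2s, h3s, h5s]
    have key : (sg e m1 * |B1|) * (sg e m2 * |B2|) * (sg e m3 * |B3|) * (sg e m1 * sg e m2 * sg e m3 * |B5|) = |B1| * |B2| * |B3| * |B5| := by
      linear_combination (|B1| * |B2| * |B3| * |B5|) * (1) * (sg_sq e m1) + (|B1| * |B2| * |B3| * |B5|) * (1 * (sg e m1 * sg e m1)) * (sg_sq e m2) + (|B1| * |B2| * |B3| * |B5|) * (1 * (sg e m1 * sg e m1) * (sg e m2 * sg e m2)) * (sg_sq e m3)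
    rw [key]
    exact prodabs4 B1 B2 B3 B5
  have hc2 : B1 * B2 * B4 * B6 ≤ C1 * C2 * C4 * C6 := by
    rw [h1s, h2s, h4s, h6s]
    have key : (sg e m1 * |B1|) * (sg e m2 * |B2|) * (sg e m4 * |B4|) * (sg e m1 * sg e m2 * sg e m4 * |B6|) = |B1| * |B2| * |B4| * |B6| := by
      linear_combination (|B1| * |B2| * |B4| * |B6|) * (1) * (sg_sq e m1) + (|B1| * |B2| * |B4| * |B6|) * (1 * (sg e m1 * sg e m1)) * (sg_sq e m2) + (|B1| * |B2| * |B4| * |B6|) * (1 * (sg e m1 * sg e m1) * (sg e m2 * sg e m2)) * (sg_sq e m4)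
    rw [key]
    exact prodabs4 B1 B2 B4 B6
  have hc3 : B1 * B2 * B7 * B8 ≤ C1 * C2 * C7 * C8 := by
    rw [h1s, h2s, h7s, h8s]
    have key : (sg e m1 * |B1|) * (sg e m2 * |B2|) * (sg e m1 * sg e m3 * sg e m4 * |B7|) * (sg e m2 * sg e m3 * sg e m4 * |B8|) = |B1| * |B2| * |B7| * |B8| := by
      linear_combination (|B1| * |B2| * |B7| * |B8|) * (1) * (sg_sq e m1) + (|B1| * |B2| * |B7| * |B8|) * (1 * (sg e m1 * sg e m1)) * (sg_sq e m2) + (|B1| * |B2| * |B7| * |B8|) * (1 * (sg e m1 * sg e m1) * (sg e m2 * sg e m2)) * (sg_sq e m3) + (|B1| * |B2| * |B7| * |B8|) * (1 * (sg e m1 * sg e m1) * (sg e m2 * sg e m2) * (sg e m3 * sg e m3)) * (sg_sq e m4)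
    rw [key]
    exact prodabs4 B1 B2 B7 B8
  have hc4 : B1 * B3 * B4 * B7 ≤ C1 * C3 * C4 * C7 := by
    rw [h1s, h3s, h4s, h7s]
    have key : (sg e m1 * |B1|) * (sg e m3 * |B3|) * (sg e m4 * |B4|) * (sg e m1 * sg e m3 * sg e m4 * |B7|) = |B1| * |B3| * |B4| * |B7| := by
      linear_combination (|B1| * |B3| * |B4| * |B7|) * (1) * (sg_sq e m1) + (|B1| * |B3| * |B4| * |B7|) * (1 * (sg e m1 * sg e m1)) * (sg_sq e m3) + (|B1| * |B3| * |B4| * |B7|) * (1 * (sg e m1 * sg e m1) * (sg e m3 * sg e m3)) * (sg_sq e m4)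
    rw [key]
    exact prodabs4 B1 B3 B4 B7
  have hc5 : B1 * B3 * B6 * B8 ≤ C1 * C3 * C6 * C8 := by
    rw [h1s, h3s, h6s, h8s]
    have key : (sg e m1 * |B1|) * (sg e m3 * |B3|) * (sg e m1 * sg e m2 * sg e m4 * |B6|) * (sg e m2 * sg e m3 * sg e m4 * |B8|) = |B1| * |B3| * |B6| * |B8| := by
      linear_combination (|B1| * |B3| * |B6| * |B8|) * (1) * (sg_sq e m1) + (|B1| * |B3| * |B6| * |B8|) * (1 * (sg e m1 * sg e m1)) * (sg_sq e m2) + (|B1| * |B3| * |B6| * |B8|) * (1 * (sg e m1 * sg e m1) * (sg e m2 * sg e m2)) * (sg_sq e m3) + (|B1| * |B3| * |B6| * |B8|) * (1 * (sg e m1 * sg e m1) * (sg e m2 * sg e m2) * (sg e m3 * sg e m3)) * (sg_sq e m4)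
    rw [key]
    exact prodabs4 B1 B3 B6 B8
  have hc6 : B1 * B4 * B5 * B8 ≤ C1 * C4 * C5 * C8 := by
    rw [h1s, h4s, h5s, h8s]
    have key : (sg e m1 * |B1|) * (sg e m4 * |B4|) * (sg e m1 * sg e m2 * sg e m3 * |B5|) * (sg e m2 * sg e m3 * sg e m4 * |B8|) = |B1| * |B4| * |B5| * |B8| := by
      linear_combination (|B1| * |B4| * |B5| * |B8|) * (1) * (sg_sq e m1) + (|B1| * |B4| * |B5| * |B8|) * (1 * (sg e m1 * sg e m1)) * (sg_sq e m2) + (|B1| * |B4| * |B5| * |B8|) * (1 * (sg e m1 * sg e m1) * (sg e m2 * sg e m2)) * (sg_sq e m3) + (|B1| * |B4| * |B5| * |B8|) * (1 * (sg e m1 * sg e m1) * (sg e m2 * sg e m2) * (sg e m3 * sg e m3)) * (sg_sq e m4)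
    rw [key]
    exact prodabs4 B1 B4 B5 B8
  have hc7 : B1 * B5 * B6 * B7 ≤ C1 * C5 * C6 * C7 := by
    rw [h1s, h5s, h6s, h7s]
    have key : (sg e m1 * |B1|) * (sg e m1 * sg e m2 * sg e m3 * |B5|) * (sg e m1 * sg e m2 * sg e m4 * |B6|) * (sg e m1 * sg e m3 * sg e m4 * |B7|) = |B1| * |B5| * |B6| * |B7| := by
      linear_combination (|B1| * |B5| * |B6| * |B7|) * (1) * (sg e m1 * sg e m1 + 1) * (sg_sq e m1) + (|B1| * |B5| * |B6| * |B7|) * (1 * (sg e m1 * sg e m1) * (sg e m1 * sg e m1)) * (sg_sq e m2) + (|B1| * |B5| * |B6| * |B7|) * (1 * (sg e m1 * sg e m1) * (sg e m1 * sg e m1) * (sg e m2 * sg e m2)) * (sg_sq e m3) + (|B1| * |B5| * |B6| * |B7|) * (1 * (sg e m1 * sg e m1) * (sg e m1 * sg e m1) * (sg e m2 * sg e m2) * (sg e m3 * sg e m3)) * (sg_sq e m4)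
    rw [key]
    exact prodabs4 B1 B5 B6 B7
  have hc8 : B2 * B3 * B4 * B8 ≤ C2 * C3 * C4 * C8 := by
    rw [h2s, h3s, h4s, h8s]
    have key : (sg e m2 * |B2|) * (sg e m3 * |B3|) * (sg e m4 * |B4|) * (sg e m2 * sg e m3 * sg e m4 * |B8|) = |B2| * |B3| * |B4| * |B8| := by
      linear_combination (|B2| * |B3| * |B4| * |B8|) * (1) * (sg_sq e m2) + (|B2| * |B3| * |B4| * |B8|) * (1 * (sg e m2 * sg e m2)) * (sg_sq e m3) + (|B2| * |B3| * |B4| * |B8|) * (1 * (sg e m2 * sg e m2) * (sg e m3 * sg e m3)) * (sg_sq e m4)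
    rw [key]
    exact prodabs4 B2 B3 B4 B8
  have hc9 : B2 * B3 * B6 * B7 ≤ C2 * C3 * C6 * C7 := by
    rw [h2s, h3s, h6s, h7s]
    have key : (sg e m2 * |B2|) * (sg e m3 * |B3|) * (sg e m1 * sg e m2 * sg e m4 * |B6|) * (sg e m1 * sg e m3 * sg e m4 * |B7|) = |B2| * |B3| * |B6| * |B7| := by
      linear_combination (|B2| * |B3| * |B6| * |B7|) * (1) * (sg_sq e m1) + (|B2| * |B3| * |B6| * |B7|) * (1 * (sg e m1 * sg e m1)) * (sg_sq e m2) + (|B2| * |B3| * |B6| * |B7|) * (1 * (sg e m1 * sg e m1) * (sg e m2 * sg e m2)) * (sg_sq e m3) + (|B2| * |B3| * |B6| * |B7|) * (1 * (sg e m1 * sg e m1) * (sg e m2 * sg e m2) * (sg e m3 * sg e m3)) * (sg_sq e m4)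
    rw [key]
    exact prodabs4 B2 B3 B6 B7
  have hc10 : B2 * B4 * B5 * B7 ≤ C2 * C4 * C5 * C7 := by
    rw [h2s, h4s, h5s, h7s]
    have key : (sg e m2 * |B2|) * (sg e m4 * |B4|) * (sg e m1 * sg e m2 * sg e m3 * |B5|) * (sg e m1 * sg e m3 * sg e m4 * |B7|) = |B2| * |B4| * |B5| * |B7| := by
      linear_combination (|B2| * |B4| * |B5| * |B7|) * (1) * (sg_sq e m1) + (|B2| * |B4| * |B5| * |B7|) * (1 * (sg e m1 * sg e m1)) * (sg_sq e m2) + (|B2| * |B4| * |B5| * |B7|) * (1 * (sg e m1 * sg e m1) * (sg e m2 * sg e m2)) * (sg_sq e m3) + (|B2| * |B4| * |B5| * |B7|) * (1 * (sg e m1 * sg e m1) * (sg e m2 * sg e m2) * (sg e m3 * sg e m3)) * (sg_sq e m4)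
    rw [key]
    exact prodabs4 B2 B4 B5 B7
  have hc11 : B2 * B5 * B6 * B8 ≤ C2 * C5 * C6 * C8 := by
    rw [h2s, h5s, h6s, h8s]
    have key : (sg e m2 * |B2|) * (sg e m1 * sg e m2 * sg e m3 * |B5|) * (sg e m1 * sg e m2 * sg e m4 * |B6|) * (sg e m2 * sg e m3 * sg e m4 * |B8|) = |B2| * |B5| * |B6| * |B8| := by
      linear_combination (|B2| * |B5| * |B6| * |B8|) * (1) * (sg_sq e m1) + (|B2| * |B5| * |B6| * |B8|) * (1 * (sg e m1 * sg e m1)) * (sg e m2 * sg e m2 + 1) * (sg_sq e m2) + (|B2| * |B5| * |B6| * |B8|) * (1 * (sg e m1 * sg e m1) * (sg e m2 * sg e m2) * (sg e m2 * sg e m2)) * (sg_sq e m3) + (|B2| * |B5| * |B6| * |B8|) * (1 * (sg e m1 * sg e m1) * (sg e m2 * sg e m2) * (sg e m2 * sg e m2) * (sg e m3 * sg e m3)) * (sg_sq e m4)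
    rw [key]
    exact prodabs4 B2 B5 B6 B8
  have hc12 : B3 * B4 * B5 * B6 ≤ C3 * C4 * C5 * C6 := by
    rw [h3s, h4s, h5s, h6s]
    have key : (sg e m3 * |B3|) * (sg e m4 * |B4|) * (sg e m1 * sg e m2 * sg e m3 * |B5|) * (sg e m1 * sg e m2 * sg e m4 * |B6|) = |B3| * |B4| * |B5| * |B6| := by
      linear_combination (|B3| * |B4| * |B5| * |B6|) * (1) * (sg_sq e m1) + (|B3| * |B4| * |B5| * |B6|) * (1 * (sg e m1 * sg e m1)) * (sg_sq e m2) + (|B3| * |B4| * |B5| * |B6|) * (1 * (sg e m1 * sg e m1) * (sg e m2 * sg e m2)) * (sg_sq e m3) + (|B3| * |B4| * |B5| * |B6|) * (1 * (sg e m1 * sg e m1) * (sg e m2 * sg e m2) * (sg e m3 * sg e m3)) * (sg_sq e m4)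
    rw [key]
    exact prodabs4 B3 B4 B5 B6
  have hc13 : B3 * B5 * B7 * B8 ≤ C3 * C5 * C7 * C8 := by
    rw [h3s, h5s, h7s, h8s]
    have key : (sg e m3 * |B3|) * (sg e m1 * sg e m2 * sg e m3 * |B5|) * (sg e m1 * sg e m3 * sg e m4 * |B7|) * (sg e m2 * sg e m3 * sg e m4 * |B8|) = |B3| * |B5| * |B7| * |B8| := by
      linear_combination (|B3| * |B5| * |B7| * |B8|) * (1) * (sg_sq e m1) + (|B3| * |B5| * |B7| * |B8|) * (1 * (sg e m1 * sg e m1)) * (sg_sq e m2) + (|B3| * |B5| * |B7| * |B8|) * (1 * (sg e m1 * sg e m1) * (sg e m2 * sg e m2)) * (sg e m3 * sg e m3 + 1) * (sg_sq e m3) + (|B3| * |B5| * |B7| * |B8|) * (1 * (sg e m1 * sg e m1) * (sg e m2 * sg e m2) * (sg e m3 * sg e m3) * (sg e m3 * sg e m3)) * (sg_sq e m4)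
    rw [key]
    exact prodabs4 B3 B5 B7 B8
  have hc14 : B4 * B6 * B7 * B8 ≤ C4 * C6 * C7 * C8 := by
    rw [h4s, h6s, h7s, h8s]
    have key : (sg e m4 * |B4|) * (sg e m1 * sg e m2 * sg e m4 * |B6|) * (sg e m1 * sg e m3 * sg e m4 * |B7|) * (sg e m2 * sg e m3 * sg e m4 * |B8|) = |B4| * |B6| * |B7| * |B8| := by
      linear_combination (|B4| * |B6| * |B7| * |B8|) * (1) * (sg_sq e m1) + (|B4| * |B6| * |B7| * |B8|) * (1 * (sg e m1 * sg e m1)) * (sg_sq e m2) + (|B4| * |B6| * |B7| * |B8|) * (1 * (sg e m1 * sg e m1) * (sg e m2 * sg e m2)) * (sg_sq e m3) + (|B4| * |B6| * |B7| * |B8|) * (1 * (sg e m1 * sg e m1) * (sg e m2 * sg e m2) * (sg e m3 * sg e m3)) * (sg e m4 * sg e m4 + 1) * (sg_sq e m4)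
    rw [key]
    exact prodabs4 B4 B6 B7 B8
  have hc15 : B1 * B2 * B3 * B4 * B5 * B6 * B7 * B8 ≤ C1 * C2 * C3 * C4 * C5 * C6 * C7 * C8 := by
    rw [h1s, h2s, h3s, h4s, h5s, h6s, h7s, h8s]
    have key : (sg e m1 * |B1|) * (sg e m2 * |B2|) * (sg e m3 * |B3|) * (sg e m4 * |B4|) * (sg e m1 * sg e m2 * sg e m3 * |B5|) * (sg e m1 * sg e m2 * sg e m4 * |B6|) * (sg e m1 * sg e m3 * sg e m4 * |B7|) * (sg e m2 * sg e m3 * sg e m4 * |B8|) = |B1| * |B2| * |B3| * |B4| * |B5| * |B6| * |B7| * |B8| := by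
      linear_combination (|B1| * |B2| * |B3| * |B4| * |B5| * |B6| * |B7| * |B8|) * (1) * (sg e m1 * sg e m1 + 1) * (sg_sq e m1) + (|B1| * |B2| * |B3| * |B4| * |B5| * |B6| * |B7| * |B8|) * (1 * (sg e m1 * sg e m1) * (sg e m1 * sg e m1)) * (sg e m2 * sg e m2 + 1) * (sg_sq e m2) + (|B1| * |B2| * |B3| * |B4| * |B5| * |B6| * |B7| * |B8|) * (1 * (sg e m1 * sg e m1) * (sg e m1 * sg e m1) * (sg e m2 * sg e m2) * (sg e m2 * sg e m2)) * (sg e m3 * sg e m3 + 1) * (sg_sq e m3) + (|B1| * |B2| * |B3| * |B4| * |B5| * |B6| * |B7| * |B8|) * (1 * (sg e m1 * sg e m1) * (sg e m1 * sg e m1) * (sg e m2 * sg e m2) * (sg e m2 * sg e m2) * (sg e m3 * sg e m3) * (sg e m3 * sg e m3)) * (sg e m4 * sg e m4 + 1) * (sg_sq e m4)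
    rw [key]
    exact prodabs8 B1 B2 B3 B4 B5 B6 B7 B8
  simp only [TT]
  rw [h1a, h1b, h2a, h2b, h3a, h3b, h4a, h4b, h5a, h5b, h6a, h6b, h7a, h7b, h8a, h8b, h1c, h1d, h2c, h2d, h3c, h3d, h4c, h4d, h5c, h5d, h6c, h6d, h7c, h7d, h8c, h8d]
  exact core16 A1 A2 A3 A4 A5 A6 A7 A8 B1 B2 B3 B4 B5 B6 B7 B8 C1 C2 C3 C4 C5 C6 C7 C8
    h1A h2A h3A h4A h5A h6A h7A h8A hc1 hc2 hc3 hc4 hc5 hc6 hc7 hc8 hc9 hc10 hc11 hc12 hc13 hc14 hc15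


theorem cmp_nonneg {n : ℕ} (nu : BitVec n → ℝ) (hnu : ∀ i, 0 ≤ nu i) (e : BitVec n) :
    ∀ x, 0 ≤ cmp nu e x := by
  intro x; unfold cmp; split
  · exact le_max_of_le_left (hnu x)
  · exact le_min (hnu x) (hnu _)

theorem xorSum_le_cmp {n : ℕ} (nu : BitVec n → ℝ) (hnu : ∀ i, 0 ≤ nu i) (e : BitVec n)
    (he : e ≠ 0#n) : xorSum nu ≤ xorSum (cmp nu e) := by
  have h1 := sumTT (fun x => Real.sqrt (nu x)) e
  have h2 := sumTT (fun x => Real.sqrt (cmp nu e x)) e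
  have hm : (∑ m1, ∑ m2, ∑ m3, ∑ m4, TT (fun x => Real.sqrt (nu x)) e m1 m2 m3 m4)
      ≤ ∑ m1, ∑ m2, ∑ m3, ∑ m4, TT (fun x => Real.sqrt (cmp nu e x)) e m1 m2 m3 m4 :=
    Finset.sum_le_sum fun m1 _ => Finset.sum_le_sum fun m2 _ => Finset.sum_le_sum fun m3 _ =>
      Finset.sum_le_sum fun m4 _ => TTle nu hnu e he m1 m2 m3 m4
  rw [xorSum_eq nu hnu, xorSum_eq (cmp nu e) (cmp_nonneg nu hnu e)]
  linarith


/-- the compression is a rearrangement -/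
theorem cmp_perm (nu : BitVec n → ℝ) (e : BitVec n) (he : e ≠ 0#n) :
    ∃ p : Equiv.Perm (BitVec n), ∀ x, cmp nu e x = nu (p x) := by
  classical
  set c : BitVec n → Prop := fun x =>
    if x.toNat < (x ^^^ e).toNat then nu x < nu (x ^^^ e) else nu (x ^^^ e) < nu x with hc
  have hne : ∀ x : BitVec n, (x ^^^ e).toNat ≠ x.toNat := by
    intro x h
    exact xor_ne x he (BitVec.toNat_injective h)
  have hcsym : ∀ x, c (x ^^^ e) ↔ c x := by
    intro x
    by_cases hlow : x.toNat < (x ^^^ e).toNat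
    · have h2 : ¬ (x ^^^ e).toNat < ((x ^^^ e) ^^^ e).toNat := by rw [xx]; omega
      simp only [hc, if_pos hlow, if_neg h2, xx]
    · have h1 : (x ^^^ e).toNat < ((x ^^^ e) ^^^ e).toNat := by rw [xx]; have := hne x; omega
      simp only [hc, if_pos h1, if_neg hlow, xx]
  set t : BitVec n → BitVec n := fun x => if c x then x ^^^ e else x with ht
  have hinv : Function.Involutive t := by
    intro x
    by_cases h : c x
    · have h2 : c (x ^^^ e) := (hcsym x).2 h
      simp only [ht, if_pos h, if_pos h2, xx]
    · simp only [ht, if_neg h]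
  have hcdef : ∀ x : BitVec n, c x ↔
      (if x.toNat < (x ^^^ e).toNat then nu x < nu (x ^^^ e) else nu (x ^^^ e) < nu x) :=
    fun x => Iff.rfl
  refine ⟨hinv.toPerm, ?_⟩
  intro x
  show cmp nu e x = nu (t x)
  by_cases hlow : x.toNat < (x ^^^ e).toNat
  · by_cases hcx : c x
    · have hv : nu x < nu (x ^^^ e) := by rw [hcdef x, if_pos hlow] at hcx; exact hcx
      simp only [cmp, if_pos hlow, ht, if_pos hcx]
      exact max_eq_right hv.le
    · have hv : ¬ nu x < nu (x ^^^ e) := by rw [hcdef x, if_pos hlow] at hcx; exact hcx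
      simp only [cmp, if_pos hlow, ht, if_neg hcx]
      exact max_eq_left (not_lt.1 hv)
  · by_cases hcx : c x
    · have hv : nu (x ^^^ e) < nu x := by rw [hcdef x, if_neg hlow] at hcx; exact hcx
      simp only [cmp, if_neg hlow, ht, if_pos hcx]
      exact min_eq_right hv.le
    · have hv : ¬ nu (x ^^^ e) < nu x := by rw [hcdef x, if_neg hlow] at hcx; exact hcx
      simp only [cmp, if_neg hlow, ht, if_neg hcx]
      exact min_eq_left (not_lt.1 hv)

/-- potential function -/
noncomputable def phi (nu : BitVec n → ℝ) : ℝ := ∑ x, nu x * (2 ^ n - (x.toNat : ℝ))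

theorem phi_lt (nu : BitVec n → ℝ) (e : BitVec n) (he : e ≠ 0#n) (x0 : BitVec n)
    (hx0 : x0.toNat < (x0 ^^^ e).toNat) (hv : nu x0 < nu (x0 ^^^ e)) :
    phi nu < phi (cmp nu e) := by
  classical
  have hne : ∀ x : BitVec n, (x ^^^ e).toNat ≠ x.toNat := by
    intro x h
    exact xor_ne x he (BitVec.toNat_injective h)
  set w : BitVec n → ℝ := fun x => (2 ^ n : ℝ) - x.toNat with hw
  set D : BitVec n → ℝ := fun x => (cmp nu e x - nu x) * w x with hD
  have hgoal : (0:ℝ) < ∑ x, D x → phi nu < phi (cmp nu e) := by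
    intro h
    have : phi (cmp nu e) - phi nu = ∑ x, D x := by
      rw [phi, phi, ← Finset.sum_sub_distrib]
      refine Finset.sum_congr rfl fun x _ => by simp only [hD, hw]; ring
    linarith
  apply hgoal
  set lows : Finset (BitVec n) := Finset.univ.filter (fun x => x.toNat < (x ^^^ e).toNat) with hl
  have hsplit : (∑ x, D x) = ∑ x ∈ lows, D x + ∑ x ∈ Finset.univ.filter (fun x => ¬ x.toNat < (x ^^^ e).toNat), D x := by
    rw [hl, Finset.sum_filter_add_sum_filter_not]
  have himg : Finset.univ.filter (fun x : BitVec n => ¬ x.toNat < (x ^^^ e).toNat)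
      = lows.image (· ^^^ e) := by
    ext x
    simp only [Finset.mem_filter, Finset.mem_image, Finset.mem_univ, true_and, hl]
    constructor
    · intro h
      exact ⟨x ^^^ e, by rw [xx]; have := hne x; omega, xx x e⟩
    · rintro ⟨y, hy, rfl⟩
      rw [xx]
      omega
  have hsum2 : ∑ x ∈ Finset.univ.filter (fun x : BitVec n => ¬ x.toNat < (x ^^^ e).toNat), D x
      = ∑ x ∈ lows, D (x ^^^ e) := by
    rw [himg, Finset.sum_image]
    intro a _ b _ hab
    have := congrArg (· ^^^ e) hab
    simpa [xx] using this
  rw [hsplit, hsum2, ← Finset.sum_add_distrib]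
  have hterm : ∀ x ∈ lows, D x + D (x ^^^ e) = (max (nu x) (nu (x ^^^ e)) - nu x) * (w x - w (x ^^^ e)) := by
    intro x hx
    have hlow : x.toNat < (x ^^^ e).toNat := by
      simpa [hl] using hx
    have hnl : ¬ (x ^^^ e).toNat < ((x ^^^ e) ^^^ e).toNat := by rw [xx]; omega
    have h1 : cmp nu e x = max (nu x) (nu (x ^^^ e)) := by rw [cmp, if_pos hlow]
    have h2 : cmp nu e (x ^^^ e) = min (nu (x ^^^ e)) (nu x) := by
      rw [cmp, if_neg hnl, xx]
    have hmm : min (nu (x ^^^ e)) (nu x) = nu x + nu (x ^^^ e) - max (nu x) (nu (x ^^^ e)) := by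
      rcases le_total (nu x) (nu (x ^^^ e)) with h | h
      · rw [min_eq_right h, max_eq_right h]; ring
      · rw [min_eq_left h, max_eq_left h]; ring
    rw [hD]
    simp only
    rw [h1, h2, hmm]
    ring
  rw [Finset.sum_congr rfl hterm]
  apply Finset.sum_pos'
  · intro x hx
    have hlow : x.toNat < (x ^^^ e).toNat := by simpa [hl] using hx
    have h1 : nu x ≤ max (nu x) (nu (x ^^^ e)) := le_max_left _ _
    have h2 : w (x ^^^ e) ≤ w x := by
      simp only [hw]
      have : (x.toNat : ℝ) ≤ ((x ^^^ e).toNat : ℝ) := by exact_mod_cast hlow.le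
      linarith
    nlinarith
  · refine ⟨x0, Finset.mem_filter.2 ⟨Finset.mem_univ _, hx0⟩, ?_⟩
    have h2 : w (x0 ^^^ e) < w x0 := by
      simp only [hw]
      have : (x0.toNat : ℝ) < ((x0 ^^^ e).toNat : ℝ) := by exact_mod_cast hx0
      linarith
    have h1 : 0 < max (nu x0) (nu (x0 ^^^ e)) - nu x0 := by
      rw [max_eq_right hv.le]; linarith
    nlinarith


theorem antitone_unique {f g : BitVec n → ℝ} (p : Equiv.Perm (BitVec n))
    (hfg : ∀ x, f x = g (p x))
    (hf : ∀ x y : BitVec n, x.toNat ≤ y.toNat → f y ≤ f x)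
    (hg : ∀ x y : BitVec n, x.toNat ≤ y.toNat → g y ≤ g x) : f = g := by
  classical
  set bvE : Fin (2 ^ n) ≃ BitVec n :=
    ⟨BitVec.ofFin, BitVec.toFin, fun _ => rfl, fun _ => rfl⟩ with hbvE
  have htoNat : ∀ i : Fin (2 ^ n), (bvE i).toNat = i.val := fun i => rfl
  set q : Equiv.Perm (Fin (2 ^ n)) := bvE.trans (p.trans bvE.symm) with hq
  set G0 : Fin (2 ^ n) → ℝ := fun i => -(g (bvE i)) with hG
  have hGmono : Monotone G0 := by
    intro i j hij
    simp only [hG, neg_le_neg_iff]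
    exact hg (bvE i) (bvE j) (by rw [htoNat, htoNat]; exact hij)
  have hbvq : ∀ i, bvE (q i) = p (bvE i) := by
    intro i
    simp only [hq, Equiv.trans_apply]
    exact bvE.apply_symm_apply _
  have hGq : Monotone (G0 ∘ q) := by
    intro i j hij
    simp only [Function.comp_apply, hG, neg_le_neg_iff, hbvq]
    rw [← hfg, ← hfg]
    exact hf (bvE i) (bvE j) (by rw [htoNat, htoNat]; exact hij)
  have huni := Tuple.unique_monotone (f := G0) (σ := q) (τ := Equiv.refl _) hGq
    (by simpa using hGmono)
  funext x
  have hx := congrFun huni (bvE.symm x)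
  simp only [Function.comp_apply, Equiv.refl_apply, hG, hbvq, bvE.apply_symm_apply,
    neg_inj] at hx
  rw [hfg x, ← hx]

theorem main {n : ℕ} (lam mu : BitVec n → ℝ)
    (hnn : ∀ i, 0 ≤ lam i)
    (hperm : ∃ e : Equiv.Perm (BitVec n), ∀ i, mu i = lam (e i))
    (hmono : ∀ i j : BitVec n, i.toNat ≤ j.toNat → mu j ≤ mu i) :
    xorSum lam ≤ xorSum mu := by
  classical
  obtain ⟨p0, hp0⟩ := hperm
  have hne : (Finset.univ : Finset (Equiv.Perm (BitVec n))).Nonempty := ⟨1, Finset.mem_univ 1⟩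
  obtain ⟨p1, _, hmax1⟩ := Finset.exists_max_image Finset.univ
    (fun p : Equiv.Perm (BitVec n) => xorSum (fun x => lam (p x))) hne
  set V := xorSum (fun x => lam (p1 x)) with hV
  set T : Finset (Equiv.Perm (BitVec n)) :=
    Finset.univ.filter (fun p => xorSum (fun x => lam (p x)) = V) with hT
  have hTne : T.Nonempty := ⟨p1, Finset.mem_filter.2 ⟨Finset.mem_univ _, rfl⟩⟩
  obtain ⟨p2, hp2T, hmax2⟩ := Finset.exists_max_image T
    (fun p => phi (fun x => lam (p x))) hTne
  set ν : BitVec n → ℝ := fun x => lam (p2 x) with hν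
  have hνnn : ∀ i, 0 ≤ ν i := fun i => hnn _
  have hνV : xorSum ν = V := (Finset.mem_filter.1 hp2T).2
  have hanti : ∀ x y : BitVec n, x.toNat ≤ y.toNat → ν y ≤ ν x := by
    by_contra hcon
    push_neg at hcon
    obtain ⟨x, y, hxy, hlt⟩ := hcon
    have hxney : x ≠ y := by
      intro h; subst h; exact lt_irrefl _ hlt
    have hxylt : x.toNat < y.toNat :=
      lt_of_le_of_ne hxy (fun h => hxney (BitVec.toNat_injective h))
    set e := x ^^^ y with he'
    have hy : x ^^^ e = y := xor_cancel' x y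
    have he : e ≠ 0#n := by
      intro h
      apply hxney
      have := congrArg (x ^^^ ·) h
      simp only [he'] at this
      rw [xor_cancel', BitVec.xor_zero] at this
      exact this.symm
    have h1 : xorSum ν ≤ xorSum (cmp ν e) := xorSum_le_cmp ν hνnn e he
    obtain ⟨q, hqq⟩ := cmp_perm ν e he
    have hcompeq : cmp ν e = fun z => lam ((q.trans p2) z) := funext fun z => by
      rw [hqq z]; rfl
    have h2 : xorSum (cmp ν e) ≤ V := by
      rw [hcompeq]; exact hmax1 _ (Finset.mem_univ _)
    have h3 : xorSum (cmp ν e) = V := le_antisymm h2 (hνV ▸ h1)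
    have hqT : q.trans p2 ∈ T := Finset.mem_filter.2 ⟨Finset.mem_univ _, by
      rw [← hcompeq]; exact h3⟩
    have h4 : phi (fun z => lam ((q.trans p2) z)) ≤ phi ν := hmax2 _ hqT
    have h5 : phi ν < phi (cmp ν e) := phi_lt ν e he x (by rw [hy]; exact hxylt)
      (by rw [hy]; exact hlt)
    rw [hcompeq] at h5
    linarith
  have hmueq : mu = ν := by
    apply antitone_unique (p0.trans p2.symm)
    · intro x
      rw [hp0 x]
      show lam (p0 x) = ν (p2.symm (p0 x))
      rw [hν]
      simp only [Equiv.apply_symm_apply]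
    · exact hmono
    · exact hanti
  have hstart : xorSum lam ≤ V := by
    have : xorSum lam = xorSum (fun x => lam ((1 : Equiv.Perm (BitVec n)) x)) := by
      congr 1
    rw [this]
    exact hmax1 1 (Finset.mem_univ 1)
  rw [hmueq, hνV]
  exact hstart


end XorProof

/-- Fix `n ≥ 1` and a nonnegative `λ : BitVec n → ℝ` with `Σ_i λ_i = 1`.
If `μ` is the nonincreasing rearrangement of `λ` with respect to the numeric order on
`BitVec n` (same multiset of values, `μ_i ≥ μ_j` whenever `i ≤ j` numerically), then
`X(λ) ≤ X(μ)`; i.e. the non-local stabilizer 2-Rényi entropy estimate `−log X` is minimized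
when the eigenvalues are in descending order. -/
theorem xorSum_le_xorSum_of_sorted {n : ℕ} (hn : 1 ≤ n) (lam mu : BitVec n → ℝ)
    (hnn : ∀ i, 0 ≤ lam i) (hsum : ∑ i, lam i = 1)
    (hperm : ∃ e : Equiv.Perm (BitVec n), ∀ i, mu i = lam (e i))
    (hmono : ∀ i j : BitVec n, i.toNat ≤ j.toNat → mu j ≤ mu i) :
    xorSum lam ≤ xorSum mu :=
  XorProof.main lam mu hnn hperm hmono
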